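/- With D((t,S₁),(w,S₂)) = |t−w| + H_d(S₁ + Φ^α(w), S₂ + Φ^α(t)) on I × K_c(ℝ), the maps G_j(t, S) = (ζ_j(t), αS + Φ(ζ_j(t)) − αB(t)) are contractions: D(G_j(t,S₁), G_j(w,S₂)) ≤ max{|α|, a_j} · D((t,S₁),(w,S₂)) for all (t,S₁),(w,S₂) ∈ I × K_c(ℝ), provided max{|α|, a_j} < 1. -/

import Mathlib

open Set Metric Pointwise TopologicalSpace

private lemma aux_infDist (α : ℝ) (S₁ U₁ S₂ U₂ P Q R V : Set ℝ)
    (h2 : IsCompact (S₂ + U₂)) (hne2 : (S₂ + U₂).Nonempty)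
    (hfin : EMetric.hausdorffEdist (S₁ + U₁) (S₂ + U₂) ≠ ⊤) :
    ∀ z ∈ (α • S₁ + P - α • Q) + (R + α • (U₁ - V)),
      Metric.infDist z ((α • S₂ + R - α • V) + (P + α • (U₂ - Q))) ≤
        |α| * Metric.hausdorffDist (S₁ + U₁) (S₂ + U₂) := by
  intro z hz
  obtain ⟨x, hx, y, hy, rfl⟩ := Set.mem_add.1 hz
  obtain ⟨u, hu, q, hq, rfl⟩ := Set.mem_sub.1 hx
  obtain ⟨p1, hp1, f, hf, rfl⟩ := Set.mem_add.1 hu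
  obtain ⟨s1, hs1, rfl⟩ := hp1
  obtain ⟨b, hb, rfl⟩ := hq
  obtain ⟨g, hg, m, hm, rfl⟩ := Set.mem_add.1 hy
  obtain ⟨n, hn, rfl⟩ := hm
  obtain ⟨u1, hu1, v, hv, rfl⟩ := Set.mem_sub.1 hn
  obtain ⟨y2, hy2, hy2dist⟩ := h2.exists_infDist_eq_dist hne2 (s1 + u1)
  obtain ⟨s2, hs2, u2, hu2, rfl⟩ := Set.mem_add.1 hy2
  have hmem : (α • s2 + g - α • v) + (f + α • (u2 - b)) ∈
      (α • S₂ + R - α • V) + (P + α • (U₂ - Q)) := by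
    have h1 : α • s2 + g - α • v ∈ α • S₂ + R - α • V :=
      Set.sub_mem_sub (Set.add_mem_add (Set.smul_mem_smul_set hs2) hg)
        (Set.smul_mem_smul_set hv)
    have h2' : f + α • (u2 - b) ∈ P + α • (U₂ - Q) :=
      Set.add_mem_add hf (Set.smul_mem_smul_set (Set.sub_mem_sub hu2 hb))
    exact Set.add_mem_add h1 h2'
  refine le_trans (Metric.infDist_le_dist_of_mem hmem) ?_
  have hdist : dist (α • s1 + f - α • b + (g + α • (u1 - v)))
      (α • s2 + g - α • v + (f + α • (u2 - b))) = |α| * dist (s1 + u1) (s2 + u2) := by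
    rw [Real.dist_eq, Real.dist_eq, ← abs_mul]
    congr 1
    simp only [smul_eq_mul]
    ring
  rw [hdist]
  have hle : dist (s1 + u1) (s2 + u2) ≤ Metric.hausdorffDist (S₁ + U₁) (S₂ + U₂) := by
    rw [← hy2dist]
    exact Metric.infDist_le_hausdorffDist_of_mem (Set.add_mem_add hs1 hu1) hfin
  exact mul_le_mul_of_nonneg_left hle (abs_nonneg α)

/-- The map `G_j(t,S) = (ζ_j(t), αS + Φ(ζ_j(t)) − αB(t))` is a contraction with ratio
`max{|α|, a_j}` for the metric `D((t,S₁),(w,S₂)) = |t−w| + H_d(S₁+Φ^α(w), S₂+Φ^α(t))`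
on `I × K_c(ℝ)`, provided `max{|α|, a_j} < 1`.  Here `ζj` has Lipschitz constant `aj`
on `I = [a, T]`, `Φ, B ∈ C(I, K_c(ℝ))` and `Φ^α` satisfies the self-referential
equation `Φ^α(ζⱼ(t)) = Φ(ζⱼ(t)) + α[Φ^α(t) − B(t)]`. -/
theorem stmt_12
    (a T : ℝ) (haT : a < T)
    (ζj : ℝ → ℝ) (aj : ℝ)
    (hζmaps : MapsTo ζj (Icc a T) (Icc a T))
    (hζlip : ∀ x ∈ Icc a T, ∀ y ∈ Icc a T, |ζj x - ζj y| ≤ aj * |x - y|)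
    (α : ℝ) (hmax : max |α| aj < 1)
    (Φ B Φα : ℝ → NonemptyCompacts ℝ)
    (hΦ : ContinuousOn Φ (Icc a T)) (hB : ContinuousOn B (Icc a T))
    (hΦα : ContinuousOn Φα (Icc a T))
    (hΦconv : ∀ t ∈ Icc a T, Convex ℝ (Φ t : Set ℝ))
    (hBconv : ∀ t ∈ Icc a T, Convex ℝ (B t : Set ℝ))
    (hΦαconv : ∀ t ∈ Icc a T, Convex ℝ (Φα t : Set ℝ))
    (hΦαeq : ∀ t ∈ Icc a T,
      (Φα (ζj t) : Set ℝ) = (Φ (ζj t) : Set ℝ) + α • ((Φα t : Set ℝ) - (B t : Set ℝ))) :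
    ∀ t ∈ Icc a T, ∀ w ∈ Icc a T, ∀ S₁ S₂ : NonemptyCompacts ℝ,
      Convex ℝ (S₁ : Set ℝ) → Convex ℝ (S₂ : Set ℝ) →
      |ζj t - ζj w| +
        Metric.hausdorffDist
          ((α • (S₁ : Set ℝ) + (Φ (ζj t) : Set ℝ) - α • (B t : Set ℝ)) + (Φα (ζj w) : Set ℝ))
          ((α • (S₂ : Set ℝ) + (Φ (ζj w) : Set ℝ) - α • (B w : Set ℝ)) + (Φα (ζj t) : Set ℝ)) ≤
      max |α| aj *
        (|t - w| + Metric.hausdorffDist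
          ((S₁ : Set ℝ) + (Φα w : Set ℝ)) ((S₂ : Set ℝ) + (Φα t : Set ℝ))) := by
  intro t ht w hw S₁ S₂ _ _
  have hc1 : IsCompact ((S₁ : Set ℝ) + (Φα w : Set ℝ)) := S₁.isCompact.add (Φα w).isCompact
  have hc2 : IsCompact ((S₂ : Set ℝ) + (Φα t : Set ℝ)) := S₂.isCompact.add (Φα t).isCompact
  have hne1 : ((S₁ : Set ℝ) + (Φα w : Set ℝ)).Nonempty := S₁.nonempty.add (Φα w).nonempty
  have hne2 : ((S₂ : Set ℝ) + (Φα t : Set ℝ)).Nonempty := S₂.nonempty.add (Φα t).nonempty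
  have hfin : EMetric.hausdorffEdist ((S₁ : Set ℝ) + (Φα w : Set ℝ))
      ((S₂ : Set ℝ) + (Φα t : Set ℝ)) ≠ ⊤ :=
    Metric.hausdorffEdist_ne_top_of_nonempty_of_bounded hne1 hne2 hc1.isBounded hc2.isBounded
  have hfin' : EMetric.hausdorffEdist ((S₂ : Set ℝ) + (Φα t : Set ℝ))
      ((S₁ : Set ℝ) + (Φα w : Set ℝ)) ≠ ⊤ := by
    rw [show EMetric.hausdorffEdist (α := ℝ) = Metric.hausdorffEDist from rfl] at hfin ⊢
    rwa [Metric.hausdorffEDist_comm]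
  set H := Metric.hausdorffDist ((S₁ : Set ℝ) + (Φα w : Set ℝ))
    ((S₂ : Set ℝ) + (Φα t : Set ℝ)) with hH
  have hHnonneg : 0 ≤ H := Metric.hausdorffDist_nonneg
  rw [hΦαeq w hw, hΦαeq t ht]
  have hkey : Metric.hausdorffDist
      ((α • (S₁ : Set ℝ) + (Φ (ζj t) : Set ℝ) - α • (B t : Set ℝ)) +
        ((Φ (ζj w) : Set ℝ) + α • ((Φα w : Set ℝ) - (B w : Set ℝ))))
      ((α • (S₂ : Set ℝ) + (Φ (ζj w) : Set ℝ) - α • (B w : Set ℝ)) +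
        ((Φ (ζj t) : Set ℝ) + α • ((Φα t : Set ℝ) - (B t : Set ℝ)))) ≤ |α| * H := by
    apply Metric.hausdorffDist_le_of_infDist (mul_nonneg (abs_nonneg α) hHnonneg)
    · exact aux_infDist α _ _ _ _ _ _ _ _ hc2 hne2 hfin
    · have := aux_infDist α (S₂ : Set ℝ) (Φα t : Set ℝ) (S₁ : Set ℝ) (Φα w : Set ℝ)
        (Φ (ζj w) : Set ℝ) (B w : Set ℝ) (Φ (ζj t) : Set ℝ) (B t : Set ℝ)
        hc1 hne1 hfin'
      intro z hz
      have h := this z hz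
      rw [Metric.hausdorffDist_comm] at h
      exact h
  have hζ : |ζj t - ζj w| ≤ aj * |t - w| := hζlip t ht w hw
  have haj : aj ≤ max |α| aj := le_max_right _ _
  have hα : |α| ≤ max |α| aj := le_max_left _ _
  have htw : (0:ℝ) ≤ |t - w| := abs_nonneg _
  nlinarith [mul_le_mul_of_nonneg_right haj htw, mul_le_mul_of_nonneg_right hα hHnonneg]
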